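/- Let p, q > 1 with 1/p + 1/q = 1, and let x, y be elements of a complex Hilbert space H. If ‖x − y‖² + ‖(1−p)•x − y‖² = p·‖x‖² + q·‖y‖², then p = 2 (and hence q = 2) or y = (1−p)•x. Conversely, if p = 2 or y = (1−p)•x, then equality holds. -/

import Mathlib

open RealInnerProductSpace

theorem bohr_equality_characterization {H : Type*} [NormedAddCommGroup H]
    [InnerProductSpace ℂ H]
    (p q : ℝ) (hp : 1 < p) (hq : 1 < q) (hpq : 1 / p + 1 / q = 1) (x y : H) :
    ‖x - y‖ ^ 2 + ‖(1 - p) • x - y‖ ^ 2 = p * ‖x‖ ^ 2 + q * ‖y‖ ^ 2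
      ↔ p = 2 ∨ y = (1 - p) • x := by
  letI : InnerProductSpace ℝ H := InnerProductSpace.complexToReal
  have hp0 : p ≠ 0 := by linarith
  have hq0 : q ≠ 0 := by linarith
  have hp1 : p - 1 ≠ 0 := by intro h; nlinarith
  have hq2 : q * (p - 1) = p := by
    field_simp at hpq
    nlinarith [hpq]
  have h1 : ‖x - y‖ ^ 2 = ‖x‖ ^ 2 - 2 * (inner ℝ x y : ℝ) + ‖y‖ ^ 2 := norm_sub_sq_real x y
  have h2 : ‖(1 - p) • x - y‖ ^ 2
      = (1 - p) ^ 2 * ‖x‖ ^ 2 - 2 * ((1 - p) * (inner ℝ x y : ℝ)) + ‖y‖ ^ 2 := by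
    rw [norm_sub_sq_real, real_inner_smul_left, norm_smul]
    simp [mul_pow, sq_abs]
  have h3 : ‖y - (1 - p) • x‖ ^ 2
      = ‖y‖ ^ 2 - 2 * ((1 - p) * (inner ℝ x y : ℝ)) + (1 - p) ^ 2 * ‖x‖ ^ 2 := by
    rw [norm_sub_sq_real, real_inner_smul_right, real_inner_comm, norm_smul]
    simp [mul_pow, sq_abs]
  constructor
  · intro h
    rw [h1, h2] at h
    have key : (p - 2) * ‖y - (1 - p) • x‖ ^ 2 = 0 := by
      rw [h3]
      linear_combination (p - 1) * h + (‖y‖ ^ 2) * hq2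
    rcases mul_eq_zero.mp key with h' | h'
    · left; linarith
    · right
      have : y - (1 - p) • x = 0 := by
        have := pow_eq_zero_iff (n := 2) (by norm_num) |>.mp h'
        simpa using this
      rw [sub_eq_zero] at this
      exact this
  · rintro (rfl | rfl)
    · have hq2' : q = 2 := by linarith [hq2]
      subst hq2'
      rw [h1, h2]
      ring
    · rw [h1, h2, real_inner_smul_right, norm_smul]
      simp only [mul_pow, Real.norm_eq_abs, sq_abs, real_inner_self_eq_norm_sq]
      linear_combination (-((p - 1) * ‖x‖ ^ 2)) * hq2
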